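/- Let ā : ℝ → ℝ be C³, attain its maximum at a unique point x_m with ā''(x_m) < 0. Define ψ_x(x) := −c/2 + sqrt(ā(x_m) − ā(x)) for x < x_m, ψ_x(x_m) := −c/2, and ψ_x(x) := −c/2 − sqrt(ā(x_m) − ā(x)) for x > x_m. Then ψ_x is differentiable at x_m with derivative −sqrt(−ā''(x_m)/2); that is, lim_{x→x_m} (ψ_x(x) − ψ_x(x_m))/(x − x_m) = −sqrt(−ā''(x_m)/2). -/

import Mathlib

open Real Topology

/-- Lemma `Diff_psi`: the piecewise derivative `ψ_x` of the explicit solution of the limiting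
Hamilton–Jacobi equation is differentiable at the maximum point `x_m` of `ā`, with derivative
`−√(−ā''(x_m)/2)`. -/
theorem psi_x_differentiable_at_max
    (c : ℝ) (abar : ℝ → ℝ) (xm : ℝ)
    (hreg : ContDiff ℝ 3 abar)
    (hmax : ∀ x, x ≠ xm → abar x < abar xm)
    (hconc : deriv (deriv abar) xm < 0) :
    Filter.Tendsto
      (fun x =>
        ((if x < xm then -c / 2 + Real.sqrt (abar xm - abar x)
          else if x = xm then -c / 2
          else -c / 2 - Real.sqrt (abar xm - abar x)) - (-c / 2)) / (x - xm))
      (𝓝[≠] xm)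
      (𝓝 (-Real.sqrt (-(deriv (deriv abar) xm) / 2))) := by
  have hd1 : Differentiable ℝ abar := hreg.differentiable (by norm_num)
  have hd2 : ContDiff ℝ 2 (deriv abar) := by
    have : ContDiff ℝ ((2 : ℕ) + 1) abar := by exact_mod_cast hreg
    exact (contDiff_succ_iff_deriv.mp this).2.2
  have hderiv0 : deriv abar xm = 0 := by
    have hlm : IsLocalMax abar xm := by
      apply Filter.Eventually.of_forall
      intro x
      by_cases h : x = xm
      · simp [h]
      · exact (hmax x h).le
    exact hlm.deriv_eq_zero
  have hD2 : HasDerivAt (deriv abar) (deriv (deriv abar) xm) xm :=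
    ((hd2.differentiable (by norm_num)) xm).hasDerivAt
  set L : ℝ := -(deriv (deriv abar) xm) / 2 with hL
  have hLpos : 0 < L := by rw [hL]; linarith
  -- slope of deriv abar tends to the second derivative
  have hslope : Filter.Tendsto (fun x => (deriv abar x) / (x - xm)) (𝓝[≠] xm)
      (𝓝 (deriv (deriv abar) xm)) := by
    have := hasDerivAt_iff_tendsto_slope.mp hD2
    refine this.congr (fun x => ?_)
    simp [slope_def_field, div_eq_inv_mul, hderiv0]
  -- the quotient g x = (abar xm - abar x)/(x - xm)^2 tends to L, via L'Hôpital
  have hg : Filter.Tendsto (fun x => (abar xm - abar x) / (x - xm) ^ 2) (𝓝[≠] xm) (𝓝 L) := by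
    apply HasDerivAt.lhopital_zero_nhdsNE
      (f' := fun x => -(deriv abar x)) (g' := fun x => 2 * (x - xm))
    · exact Filter.Eventually.of_forall fun x =>
        (((hd1 x).hasDerivAt).const_sub (abar xm))
    · exact Filter.Eventually.of_forall fun x => by
        simpa using (((hasDerivAt_id x).sub_const xm).fun_pow 2)
    · filter_upwards [self_mem_nhdsWithin] with x hx
      have : x - xm ≠ 0 := sub_ne_zero.mpr hx
      positivity
    · have h0 : Filter.Tendsto (fun x => abar xm - abar x) (𝓝 xm) (𝓝 (abar xm - abar xm)) :=
        (tendsto_const_nhds.sub (hd1.continuous.tendsto xm))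
      have := h0.mono_left (nhdsWithin_le_nhds (s := {xm}ᶜ))
      simpa using this
    · have h0 : Filter.Tendsto (fun x => (x - xm) ^ 2) (𝓝 xm) (𝓝 ((xm - xm) ^ 2)) :=
        ((continuous_id.sub continuous_const).pow 2).tendsto xm
      have := h0.mono_left (nhdsWithin_le_nhds (s := {xm}ᶜ))
      simpa using this
    · have h1 : Filter.Tendsto (fun x => -(deriv abar x / (x - xm)) / 2) (𝓝[≠] xm) (𝓝 L) := by
        rw [hL]
        exact (hslope.neg).div_const 2
      refine h1.congr' ?_
      filter_upwards [self_mem_nhdsWithin] with x hx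
      have hxne : x - xm ≠ 0 := sub_ne_zero.mpr hx
      rw [neg_div, neg_div, div_div, mul_comm]
  -- the main function eventually equals -sqrt (g x)
  have key : Filter.Tendsto (fun x => -Real.sqrt ((abar xm - abar x) / (x - xm) ^ 2))
      (𝓝[≠] xm) (𝓝 (-Real.sqrt L)) :=
    ((Real.continuous_sqrt.tendsto L).comp hg).neg
  refine key.congr' ?_
  filter_upwards [self_mem_nhdsWithin] with x hx
  have hxne : (x : ℝ) ≠ xm := hx
  have hxsub : x - xm ≠ 0 := sub_ne_zero.mpr hxne
  have hpos : 0 < abar xm - abar x := sub_pos.mpr (hmax x hxne)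
  have hsq : Real.sqrt ((abar xm - abar x) / (x - xm) ^ 2) * |x - xm|
      = Real.sqrt (abar xm - abar x) := by
    rw [← Real.sqrt_sq_eq_abs, ← Real.sqrt_mul (by positivity)]
    rw [div_mul_cancel₀]
    positivity
  rcases lt_trichotomy x xm with h | h | h
  · have habs : |x - xm| = -(x - xm) := abs_of_neg (by linarith)
    simp only [if_pos h]
    rw [← hsq, habs]
    field_simp
    ring
  · exact absurd h hxne
  · have habs : |x - xm| = x - xm := abs_of_pos (by linarith)
    have hnlt : ¬ x < xm := not_lt.mpr h.le
    simp only [if_neg hnlt, if_neg hxne]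
    rw [← hsq, habs]
    field_simp
    ring
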